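/- Let n ≥ 1 and k_1, …, k_n ≥ 1 be integers, and define f(s) = n − s − Σ_{l=1}^n 1/(1 + (s−1) + (s−1)^2 + … + (s−1)^{k_l}) for s ≥ 1. If the star-shaped graph with n branches of lengths k_1, …, k_n is a Dynkin graph, i.e. if n ≤ 2 (type A), or n = 3 and the multiset {k_1,k_2,k_3} is {1,1,m} for some m ≥ 1 (type D), {1,2,2} (type E6), {1,2,3} (type E7), or {1,2,4} (type E8), then the equation f(s) = 0 has no solution s ∈ [1, ∞). -/

import Mathlib

lemma geom_one_le {t : ℝ} (ht : 0 ≤ t) (m : ℕ) :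
    1 ≤ ∑ j ∈ Finset.range (m + 1), t ^ j := by
  calc (1:ℝ) = t ^ 0 := by simp
  _ ≤ ∑ j ∈ Finset.range (m + 1), t ^ j :=
    Finset.single_le_sum (fun j _ => pow_nonneg ht j) (Finset.mem_range.mpr (Nat.succ_pos m))

lemma ginv_ge {t : ℝ} (ht : 0 ≤ t) (m : ℕ) :
    1 - t ≤ (∑ j ∈ Finset.range (m + 1), t ^ j)⁻¹ := by
  have hg : (1:ℝ) ≤ ∑ j ∈ Finset.range (m + 1), t ^ j := geom_one_le ht m
  have hg0 : (0:ℝ) < ∑ j ∈ Finset.range (m + 1), t ^ j := by linarith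
  have key : (∑ j ∈ Finset.range (m + 1), t ^ j) * (t - 1) = t ^ (m+1) - 1 := geom_sum_mul t (m+1)
  have htp : (0:ℝ) ≤ t ^ (m+1) := pow_nonneg ht _
  have hinv : (∑ j ∈ Finset.range (m + 1), t ^ j) * (∑ j ∈ Finset.range (m + 1), t ^ j)⁻¹ = 1 :=
    mul_inv_cancel₀ hg0.ne'
  nlinarith [inv_pos.mpr hg0]

lemma sum_ofFn_multiset {n : ℕ} (k : Fin n → ℕ) (F : ℕ → ℝ) :
    ∑ l, F (k l) = (Multiset.map F (List.ofFn k : Multiset ℕ)).sum := by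
  simp [List.sum_ofFn, Function.comp]

noncomputable def starFun (n : ℕ) (k : Fin n → ℕ) (s : ℝ) : ℝ :=
  (n : ℝ) - s - ∑ l, (∑ j ∈ Finset.range (k l + 1), (s - 1) ^ j)⁻¹

set_option maxHeartbeats 1000000 in
theorem stmt_0 (n : ℕ) (hn : 1 ≤ n) (k : Fin n → ℕ) (hk : ∀ l, 1 ≤ k l)
    (hDynkin : n ≤ 2 ∨ (n = 3 ∧
      ((∃ m : ℕ, 1 ≤ m ∧ (List.ofFn k : Multiset ℕ) = {1, 1, m}) ∨
        (List.ofFn k : Multiset ℕ) = {1, 2, 2} ∨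
        (List.ofFn k : Multiset ℕ) = {1, 2, 3} ∨
        (List.ofFn k : Multiset ℕ) = {1, 2, 4}))) :
    ∀ s : ℝ, 1 ≤ s → starFun n k s ≠ 0 := by
  intro s hs
  have ht : (0:ℝ) ≤ s - 1 := by linarith
  suffices h : starFun n k s < 0 by exact ne_of_lt h
  unfold starFun
  have hFpos : ∀ m : ℕ, (0:ℝ) < (∑ j ∈ Finset.range (m + 1), (s-1) ^ j)⁻¹ :=
    fun m => inv_pos.mpr (by linarith [geom_one_le ht m])
  rcases hDynkin with hn2 | ⟨hn3, hcase⟩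
  · -- type A: n ≤ 2
    have hne : Nonempty (Fin n) := ⟨⟨0, hn⟩⟩
    rcases le_or_gt 2 s with h2 | h2
    · have hsum : 0 < ∑ l, (∑ j ∈ Finset.range (k l + 1), (s-1) ^ j)⁻¹ :=
        Finset.sum_pos (fun l _ => hFpos (k l)) Finset.univ_nonempty
      have : (n:ℝ) ≤ 2 := by exact_mod_cast hn2
      linarith
    · have hsum : (n:ℝ) * (2 - s) ≤ ∑ l, (∑ j ∈ Finset.range (k l + 1), (s-1) ^ j)⁻¹ := by
        calc (n:ℝ) * (2 - s) = ∑ _l : Fin n, (2 - s) := by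
              simp [Finset.sum_const, mul_comm]; ring
        _ ≤ _ := Finset.sum_le_sum (fun l _ => by
              have := ginv_ge ht (k l)
              linarith)
      have hn2' : (n:ℝ) ≤ 2 := by exact_mod_cast hn2
      have hn1' : (1:ℝ) ≤ (n:ℝ) := by exact_mod_cast hn
      nlinarith [mul_le_mul_of_nonneg_right hn2' (by linarith : (0:ℝ) ≤ 2 - s)]
  · -- n = 3
    subst hn3
    set t := s - 1 with hts
    have h1 : (0:ℝ) < 1 + t := by linarith
    have e2 : ∑ j ∈ Finset.range (1 + 1), t ^ j = 1 + t := by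
      simp [Finset.sum_range_succ]
    have e3 : ∑ j ∈ Finset.range (2 + 1), t ^ j = 1 + t + t^2 := by
      simp [Finset.sum_range_succ]; try ring
    have e4 : ∑ j ∈ Finset.range (3 + 1), t ^ j = 1 + t + t^2 + t^3 := by
      simp [Finset.sum_range_succ]; try ring
    have e5 : ∑ j ∈ Finset.range (4 + 1), t ^ j = 1 + t + t^2 + t^3 + t^4 := by
      simp [Finset.sum_range_succ]; try ring
    rw [sum_ofFn_multiset k (fun m => (∑ j ∈ Finset.range (m + 1), t ^ j)⁻¹)]
    rcases hcase with ⟨m, hm, hmk⟩ | hmk | hmk | hmk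
    · -- type D
      rw [hmk]
      simp only [Multiset.insert_eq_cons, Multiset.map_cons, Multiset.map_singleton,
        Multiset.sum_cons, Multiset.sum_singleton]
      rw [e2]
      have hu : (1 + t) * (1 + t)⁻¹ = 1 := mul_inv_cancel₀ h1.ne'
      have hupos : 0 < (1 + t)⁻¹ := inv_pos.mpr h1
      have hFm := hFpos m
      rcases le_or_gt 1 t with h | h
      · nlinarith [mul_pos hFm h1]
      · have hge := ginv_ge ht m
        nlinarith
    all_goals rw [hmk]
    all_goals simp only [Multiset.insert_eq_cons, Multiset.map_cons, Multiset.map_singleton,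
        Multiset.sum_cons, Multiset.sum_singleton]
    · -- E6
      rw [e2, e3]
      have hb : (0:ℝ) < 1 + t + t^2 := by positivity
      have key : ((1+t)⁻¹ + ((1+t+t^2)⁻¹ + (1+t+t^2)⁻¹)) - (2 - t)
          = (1 + t - t^3 + t^5 + t^6) / ((1+t) * (1+t+t^2) * (1+t+t^2)) := by
        field_simp
        ring
      have hN : 0 < 1 + t - t^3 + t^5 + t^6 := by nlinarith [pow_nonneg ht 3, pow_nonneg ht 5, sq_nonneg t, sq_nonneg (t-1), pow_nonneg ht 6]
      have := div_pos hN (by positivity : (0:ℝ) < (1+t) * (1+t+t^2) * (1+t+t^2))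
      linarith [key ▸ this]
    · -- E7
      rw [e2, e3, e4]
      have key : ((1+t)⁻¹ + ((1+t+t^2)⁻¹ + (1+t+t^2+t^3)⁻¹)) - (2 - t)
          = (1 + t - t^3 - t^4 + t^6 + t^7)
            / ((1+t) * (1+t+t^2) * (1+t+t^2+t^3)) := by
        field_simp
        ring
      have hN : 0 < 1 + t - t^3 - t^4 + t^6 + t^7 := by
        rcases le_or_gt 1 t with h | h
        · nlinarith [pow_le_pow_right₀ h (by norm_num : 3 ≤ 6), pow_le_pow_right₀ h (by norm_num : 4 ≤ 7)]
        · nlinarith [pow_le_pow_of_le_one ht h.le (by norm_num : 3 ≤ 3), pow_nonneg ht 6, pow_nonneg ht 7,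
            pow_le_one₀ ht h.le (n := 3), pow_le_one₀ ht h.le (n := 4)]
      have := div_pos hN (by positivity : (0:ℝ) < (1+t) * (1+t+t^2) * (1+t+t^2+t^3))
      linarith [key ▸ this]
    · -- E8
      rw [e2, e3, e5]
      have key : ((1+t)⁻¹ + ((1+t+t^2)⁻¹ + (1+t+t^2+t^3+t^4)⁻¹)) - (2 - t)
          = (1 + t - t^3 - t^4 - t^5 + t^7 + t^8)
            / ((1+t) * (1+t+t^2) * (1+t+t^2+t^3+t^4)) := by
        field_simp
        ring
      have hN : 0 < 1 + t - t^3 - t^4 - t^5 + t^7 + t^8 := by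
        rcases le_or_gt 1 t with h | h
        · nlinarith [pow_le_pow_right₀ h (by norm_num : 3 ≤ 7), pow_le_pow_right₀ h (by norm_num : 4 ≤ 8),
            pow_le_pow_right₀ h (by norm_num : 5 ≤ 7), one_le_pow₀ h (n := 8)]
        · nlinarith [pow_le_one₀ ht h.le (n := 3), pow_le_one₀ ht h.le (n := 4),
            pow_le_one₀ ht h.le (n := 5), pow_nonneg ht 7, pow_nonneg ht 8,
            sq_nonneg (1 - t), sq_nonneg t]
      have := div_pos hN (by positivity : (0:ℝ) < (1+t) * (1+t+t^2) * (1+t+t^2+t^3+t^4))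
      linarith [key ▸ this]
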